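/- Let U be a real Hilbert space, let φ : U → ℝ ∪ {+∞} be proper and lower semicontinuous, let u, g ∈ U and r, t > 0. If q_r ∈ prox_{rφ}(u − r·g) and q_t ∈ prox_{tφ}(u − t·g), then (t − r)·(⟨g, q_r − q_t⟩ + φ(q_r) − φ(q_t)) ≥ 0; that is, the quantity Q(s) = ⟨g, q_s − u⟩ + φ(q_s) − φ(u) is nonincreasing in s along any selection of proximal points. -/

import Mathlib

open Filter Topology RealInnerProductSpace

/-- `q` belongs to the proximal set `prox_{rφ}(u)`, i.e. `q` is a global minimizer of
`v ↦ (1/(2r))‖v − u‖² + φ(v)` (with `φ` taking values in `ℝ ∪ {+∞} ⊆ EReal`). -/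
def IsProxPt {U : Type*} [NormedAddCommGroup U] [InnerProductSpace ℝ U]
    (φ : U → EReal) (r : ℝ) (u q : U) : Prop :=
  ∀ v : U, ((1 / (2 * r) * ‖q - u‖ ^ 2 : ℝ) : EReal) + φ q ≤
    ((1 / (2 * r) * ‖v - u‖ ^ 2 : ℝ) : EReal) + φ v

/-- if `q_r ∈ prox_{rφ}(u − r g)` and `q_t ∈ prox_{tφ}(u − t g)`, then
`(t − r)·(⟨g, q_r − q_t⟩ + φ(q_r) − φ(q_t)) ≥ 0`, i.e. the quantity
`Q(s) = ⟨g, q_s − u⟩ + φ(q_s) − φ(u)` is nonincreasing in `s` along any selection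
of proximal points. -/
theorem prox_Q_antitone {U : Type*} [NormedAddCommGroup U] [InnerProductSpace ℝ U]
    [CompleteSpace U]
    (φ : U → EReal) (hproper : ∃ x, φ x ≠ ⊤) (hnebot : ∀ x, φ x ≠ ⊥)
    (hlsc : LowerSemicontinuous φ)
    (u g : U) (r t : ℝ) (hr : 0 < r) (ht : 0 < t)
    (qr qt : U)
    (hqr : IsProxPt φ r (u - r • g) qr)
    (hqt : IsProxPt φ t (u - t • g) qt) :
    0 ≤ ((t - r : ℝ) : EReal) * (((⟪g, qr - qt⟫ : ℝ) : EReal) + φ qr - φ qt) := by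
  obtain ⟨x0, hx0⟩ := hproper
  -- φ qr and φ qt are finite
  have hfin : ∀ (s : ℝ) (q : U), IsProxPt φ s (u - s • g) q → φ q ≠ ⊤ := by
    intro s q hq hqtop
    have h := hq x0
    rw [hqtop] at h
    have hrhs : ((1 / (2 * s) * ‖x0 - (u - s • g)‖ ^ 2 : ℝ) : EReal) + φ x0 < ⊤ := by
      apply EReal.add_lt_top
      · exact EReal.coe_ne_top _
      · exact hx0
    have hlhs : ((1 / (2 * s) * ‖q - (u - s • g)‖ ^ 2 : ℝ) : EReal) + (⊤ : EReal) = ⊤ :=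
      EReal.add_top_of_ne_bot (EReal.coe_ne_bot _)
    rw [hlhs] at h
    exact absurd (lt_of_le_of_lt h hrhs) (lt_irrefl _)
  have har := hfin r qr hqr
  have hat := hfin t qt hqt
  lift φ qr to ℝ using ⟨har, hnebot qr⟩ with a ha
  lift φ qt to ℝ using ⟨hat, hnebot qt⟩ with b hb
  have h1 := hqr qt
  have h2 := hqt qr
  rw [← ha, ← hb, ← EReal.coe_add, ← EReal.coe_add] at h1 h2
  rw [EReal.coe_le_coe_iff] at h1 h2
  -- expand norms
  have hexp : ∀ (s : ℝ) (q : U), ‖q - (u - s • g)‖ ^ 2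
      = ‖q - u‖ ^ 2 + 2 * s * ⟪q - u, g⟫ + s ^ 2 * ‖g‖ ^ 2 := by
    intro s q
    have : q - (u - s • g) = (q - u) + s • g := by abel
    rw [this, norm_add_sq_real, real_inner_smul_right, norm_smul]
    simp [mul_pow]
    ring
  rw [hexp r qr, hexp r qt] at h1
  rw [hexp t qt, hexp t qr] at h2
  have hD : 0 ≤ (t - r) * (⟪g, qr - qt⟫ + a - b) := by
    have e1 : ⟪g, qr - qt⟫ = ⟪qr - u, g⟫ - ⟪qt - u, g⟫ := by
      rw [real_inner_comm]
      rw [← inner_sub_left]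
      congr 1
      abel
    have hr' := hr.ne'
    have ht' := ht.ne'
    have h1' := (mul_le_mul_iff_of_pos_left (show (0:ℝ) < 2 * r by linarith)).2 h1
    have h2' := (mul_le_mul_iff_of_pos_left (show (0:ℝ) < 2 * t by linarith)).2 h2
    rw [mul_add, mul_add] at h1' h2'
    field_simp at h1' h2'
    nlinarith [h1', h2']
  calc (0 : EReal) = ((0 : ℝ) : EReal) := by norm_num
    _ ≤ (((t - r) * (⟪g, qr - qt⟫ + a - b) : ℝ) : EReal) := EReal.coe_le_coe_iff.2 hD
    _ = ((t - r : ℝ) : EReal) * (((⟪g, qr - qt⟫ : ℝ) : EReal) + (a : EReal) - (b : EReal)) := by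
      rw [← EReal.coe_add, ← EReal.coe_sub, ← EReal.coe_mul]
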